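/- Scaled one-sided HLLC positivity (Lemma 2.10): for any parameters ζ₁, ζ₂, ζ₃, ζ₄ > 0, any two admissible states U₀, U₁ ∈ G, and any λ > 0 satisfying λ · max{α_max(U₀), α_max(U₁)} ≤ 1, one has ζ₂U₁ − λ(F(ζ₂U₁) − F^hllc(ζ₁U₀, ζ₂U₁)) ∈ G and ζ₃U₀ − λ(F^hllc(ζ₃U₀, ζ₄U₁) − F(ζ₃U₀)) ∈ G. -/

import Mathlib

noncomputable section

/-- A 1D state `U = (ρ, m, E)`. -/
abbrev St : Type := ℝ × ℝ × ℝ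

/-- The admissible set `G = {(ρ, m, E) : ρ > 0, E − m²/(2ρ) > 0}`. -/
def admG : Set St := {U | 0 < U.1 ∧ 0 < U.2.2 - U.2.1 ^ 2 / (2 * U.1)}

/-- The velocity `u = m/ρ`. -/
def vel (U : St) : ℝ := U.2.1 / U.1

/-- The pressure `p = (γ−1)(E − m²/(2ρ))`. -/
def press (γ : ℝ) (U : St) : ℝ := (γ - 1) * (U.2.2 - U.2.1 ^ 2 / (2 * U.1))

/-- The sound speed `√(γ p / ρ)`. -/
def sound (γ : ℝ) (U : St) : ℝ := Real.sqrt (γ * press γ U / U.1)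

/-- The specific internal energy `e = (E − m²/(2ρ))/ρ`. -/
def specE (U : St) : ℝ := (U.2.2 - U.2.1 ^ 2 / (2 * U.1)) / U.1

/-- The Euler flux `F(U) = (ρu, ρu² + p, (E+p)u)`. -/
def eulerF (γ : ℝ) (U : St) : St :=
  (U.1 * vel U, U.1 * vel U ^ 2 + press γ U, (U.2.2 + press γ U) * vel U)

/-- `α₋(U) = u − √(γp/ρ)`. -/
def alphaMinus (γ : ℝ) (U : St) : ℝ := vel U - sound γ U

/-- `α₊(U) = u + √(γp/ρ)`. -/
def alphaPlus (γ : ℝ) (U : St) : ℝ := vel U + sound γ U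

/-- `α_max(U) = |u| + √(γp/ρ)`. -/
def alphaMax (γ : ℝ) (U : St) : ℝ := |vel U| + sound γ U

/-- Left wave speed `S_L = min(α₋(U_L), α₋(U_R))`. -/
def SL (γ : ℝ) (UL UR : St) : ℝ := min (alphaMinus γ UL) (alphaMinus γ UR)

/-- Right wave speed `S_R = max(α₊(U_L), α₊(U_R))`. -/
def SR (γ : ℝ) (UL UR : St) : ℝ := max (alphaPlus γ UL) (alphaPlus γ UR)

/-- Middle wave speed `S_*`. -/
def Sstar (γ : ℝ) (UL UR : St) : ℝ :=
  (press γ UR - press γ UL + UL.1 * vel UL * (SL γ UL UR - vel UL)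
      - UR.1 * vel UR * (SR γ UL UR - vel UR)) /
    (UL.1 * (SL γ UL UR - vel UL) - UR.1 * (SR γ UL UR - vel UR))

/-- HLLC intermediate state
`U_{*i} = ρ_i (S_i − u_i)/(S_i − S_*) · (1, S_*, E_i/ρ_i + (S_* − u_i)(S_* + p_i/(ρ_i(S_i − u_i))))`. -/
def Ustar (γ : ℝ) (Si Sst : ℝ) (Ui : St) : St :=
  (Ui.1 * ((Si - vel Ui) / (Si - Sst))) •
    (((1 : ℝ), Sst,
      Ui.2.2 / Ui.1 + (Sst - vel Ui) * (Sst + press γ Ui / (Ui.1 * (Si - vel Ui)))) : St)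

/-- Intermediate flux `F_{*i} = F(U_i) + S_i (U_{*i} − U_i)`. -/
def Fstar (γ : ℝ) (Si Sst : ℝ) (Ui : St) : St :=
  eulerF γ Ui + Si • (Ustar γ Si Sst Ui - Ui)

/-- The HLLC numerical flux. -/
def Fhllc (γ : ℝ) (UL UR : St) : St :=
  if 0 ≤ SL γ UL UR then eulerF γ UL
  else if 0 ≤ Sstar γ UL UR then Fstar γ (SL γ UL UR) (Sstar γ UL UR) UL
  else if 0 ≤ SR γ UL UR then Fstar γ (SR γ UL UR) (Sstar γ UL UR) UR
  else eulerF γ UR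

end

section helpers
variable {γ : ℝ}

lemma smul3 (a x y z : ℝ) : a • ((x, y, z) : St) = (a * x, a * y, a * z) := rfl

lemma mem_admG' {U : St} (h1 : 0 < U.1) :
    U ∈ admG ↔ U.2.1 ^ 2 < 2 * U.1 * U.2.2 := by
  unfold admG
  rw [Set.mem_setOf_eq, sub_pos, div_lt_iff₀ (by linarith)]
  constructor
  · intro ⟨_, h⟩; nlinarith
  · intro h; exact ⟨h1, by nlinarith⟩

lemma admG_add {U V : St} (hU : U ∈ admG) (hV : V ∈ admG) : U + V ∈ admG := by
  have h1 := hU.1; have h3 := hV.1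
  have h2 := (mem_admG' h1).mp hU
  have h4 := (mem_admG' h3).mp hV
  have hs : 0 < (U + V).1 := by simpa using add_pos h1 h3
  rw [mem_admG' hs]
  simp only [Prod.fst_add, Prod.snd_add]
  rw [← mul_lt_mul_iff_left₀ (mul_pos h1 h3)]
  nlinarith [sq_nonneg (U.2.1 * V.1 - V.2.1 * U.1), mul_lt_mul_of_pos_right h2 h3,
    mul_lt_mul_of_pos_right h4 h1, h1, h3]

lemma smul_mem {a : ℝ} (ha : 0 < a) {U : St} (hU : U ∈ admG) : a • U ∈ admG := by
  have h1 := hU.1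
  have h2 := (mem_admG' h1).mp hU
  have hs : 0 < (a • U).1 := by simpa using mul_pos ha h1
  rw [mem_admG' hs]
  simp only [Prod.smul_fst, Prod.smul_snd, smul_eq_mul]
  nlinarith [mul_lt_mul_of_pos_left h2 (mul_pos ha ha)]

lemma add_smul_mem {U V : St} (hU : U ∈ admG) {a : ℝ} (ha : 0 ≤ a) (hV : V ∈ admG) :
    U + a • V ∈ admG := by
  rcases eq_or_lt_of_le ha with h | h
  · simpa [← h] using hU
  · exact admG_add hU (smul_mem h hV)

end helpers
section helpers2
variable {γ : ℝ}

lemma press_pos (hγ : 1 < γ) {U : St} (hU : U ∈ admG) : 0 < press γ U :=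
  mul_pos (by linarith) hU.2

lemma sound_sq (hγ : 1 < γ) {U : St} (hU : U ∈ admG) :
    sound γ U ^ 2 = γ * press γ U / U.1 := by
  have hp := press_pos hγ hU
  have h1 := hU.1
  exact Real.sq_sqrt (by positivity)

lemma sound_pos (hγ : 1 < γ) {U : St} (hU : U ∈ admG) : 0 < sound γ U := by
  have hp := press_pos hγ hU
  have h1 := hU.1
  exact Real.sqrt_pos.mpr (by positivity)

/-- `2ρp = (γ−1)(2ρE − m²)`. -/
lemma press_key (hγ : 1 < γ) {U : St} (hU : U ∈ admG) :
    2 * U.1 * press γ U = (γ - 1) * (2 * U.1 * U.2.2 - U.2.1 ^ 2) := by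
  have h1 := hU.1
  have hρ : U.1 ≠ 0 := ne_of_gt h1
  have h2 : U.1 * U.1⁻¹ = 1 := mul_inv_cancel₀ hρ
  unfold press
  linear_combination (-(U.2.1 ^ 2 * (γ - 1))) * h2

/-- `ρ c² = γ p`. -/
lemma sound_key (hγ : 1 < γ) {U : St} (hU : U ∈ admG) :
    U.1 * sound γ U ^ 2 = γ * press γ U := by
  have h1 := hU.1
  rw [sound_sq hγ hU]
  field_simp

lemma shift_mem {U : St} (hU : U ∈ admG) {a b : ℝ} (ha : 0 < a)
    (hb : b ^ 2 < a ^ 2 * (2 * U.1 * U.2.2 - U.2.1 ^ 2)) :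
    a • U + b • (((0 : ℝ), (1 : ℝ), vel U) : St) ∈ admG := by
  have h1 := hU.1
  have hρ : U.1 ≠ 0 := ne_of_gt h1
  have hV : (a • U + b • (((0 : ℝ), (1 : ℝ), vel U) : St)) =
      (a * U.1, a * U.2.1 + b, a * U.2.2 + b * (U.2.1 / U.1)) := by
    unfold vel
    simp [Prod.ext_iff, Prod.smul_fst, Prod.smul_snd, smul_eq_mul]
  rw [hV, mem_admG' (by positivity)]
  have key : 2 * (a * U.1) * (a * U.2.2 + b * (U.2.1 / U.1)) - (a * U.2.1 + b)^2
      = a ^ 2 * (2 * U.1 * U.2.2 - U.2.1 ^ 2) - b ^ 2 := by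
    field_simp
    ring
  nlinarith [key]

lemma eulerF_decomp (hγ : 1 < γ) {U : St} (hU : U ∈ admG) :
    eulerF γ U = vel U • U + press γ U • (((0 : ℝ), (1 : ℝ), vel U) : St) := by
  have hρ : U.1 ≠ 0 := ne_of_gt hU.1
  unfold eulerF vel
  simp [Prod.ext_iff, Prod.smul_fst, Prod.smul_snd, smul_eq_mul]
  refine ⟨by ring, by field_simp, by ring⟩

end helpers2
section helpers3
variable {γ : ℝ}

lemma ustar_mem (hγ : 1 < γ) {U : St} (hU : U ∈ admG) {S Sst : ℝ}
    (hsgn : 0 < (S - vel U) * (S - Sst))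
    (hc : γ * press γ U ≤ U.1 * (S - vel U) ^ 2) :
    Ustar γ S Sst U ∈ admG := by
  have h1 := hU.1
  have hρ : U.1 ≠ 0 := ne_of_gt h1
  have hε := hU.2
  have hp := press_pos hγ hU
  set u : ℝ := vel U with hu_def
  set w : ℝ := S - u with hw_def
  set p : ℝ := press γ U with hp_def
  set ε : ℝ := U.2.2 - U.2.1 ^ 2 / (2 * U.1) with he_def
  have hw : w ≠ 0 := by
    intro h; rw [h] at hsgn; simp at hsgn
  have hd : S - Sst ≠ 0 := by
    intro h; rw [h] at hsgn; simp at hsgn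
  have hratio : 0 < w / (S - Sst) := by
    have : w / (S - Sst) = w * (S - Sst) / (S - Sst) ^ 2 := by
      rw [sq]; rw [mul_div_mul_right _ _ hd]
    rw [this]
    positivity
  set r : ℝ := U.1 * (w / (S - Sst)) with hr_def
  have hr : 0 < r := mul_pos h1 hratio
  set X : ℝ := U.2.2 / U.1 + (Sst - u) * (Sst + p / (U.1 * w)) with hX_def
  have hUstar : Ustar γ S Sst U = (r * 1, r * Sst, r * X) := rfl
  have hm : U.2.1 = u * U.1 := by rw [hu_def]; unfold vel; field_simp
  have hE : U.2.2 = ε + u ^ 2 * U.1 / 2 := by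
    rw [he_def, hm]; field_simp; ring
  -- the key quadratic positivity
  have hXpos : Sst ^ 2 < 2 * X := by
    have hpe : p = (γ - 1) * ε := rfl
    have heq : 2 * X - Sst ^ 2 =
        (2 * U.1 * w ^ 2 * ε + U.1 ^ 2 * w ^ 2 * (Sst - u) ^ 2
          + 2 * (Sst - u) * U.1 * w * p) / (U.1 ^ 2 * w ^ 2) := by
      rw [hX_def, hE]
      field_simp
      ring
    have hnum : 0 < 2 * U.1 * w ^ 2 * ε + U.1 ^ 2 * w ^ 2 * (Sst - u) ^ 2
        + 2 * (Sst - u) * U.1 * w * p := by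
      have h2 : γ * p ≤ U.1 * w ^ 2 := hc
      have h3 : γ * p * ε ≤ U.1 * w ^ 2 * ε := mul_le_mul_of_nonneg_right h2 (le_of_lt hε)
      nlinarith [sq_nonneg (U.1 * w * (Sst - u) + p), mul_pos hp hε]
    have : 0 < 2 * X - Sst ^ 2 := by
      rw [heq]; positivity
    linarith
  rw [hUstar, mem_admG' (by simpa using hr)]
  simp only
  nlinarith [mul_lt_mul_of_pos_left hXpos (mul_pos hr hr)]

end helpers3
section helpers4
variable {γ : ℝ}

/-- HLLC consistency: `F_{*} = S_* U_* + p_* (0,1,S_*)`. -/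
lemma fstar_eq {U : St} (hρ : U.1 ≠ 0) {s Sst : ℝ} (hd : s - Sst ≠ 0)
    (hw : s - vel U ≠ 0) :
    Fstar γ s Sst U = Sst • Ustar γ s Sst U +
      (press γ U + U.1 * (vel U - s) * (vel U - Sst)) • (((0 : ℝ), (1 : ℝ), Sst) : St) := by
  have hm : U.2.1 = vel U * U.1 := by unfold vel; field_simp
  unfold Fstar Ustar eulerF
  simp only [Prod.ext_iff, Prod.smul_fst, Prod.smul_snd, smul_eq_mul,
    Prod.fst_add, Prod.snd_add, Prod.fst_sub, Prod.snd_sub]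
  refine ⟨?_, ?_, ?_⟩
  · field_simp; ring
  · rw [hm]; field_simp; ring
  · field_simp; ring

/-- The two intermediate pressures agree. -/
lemma pstar_eq {UL UR : St} {sL sR Sst : ℝ}
    (hdef : (UL.1 * (sL - vel UL) - UR.1 * (sR - vel UR)) * Sst =
      press γ UR - press γ UL + UL.1 * vel UL * (sL - vel UL)
        - UR.1 * vel UR * (sR - vel UR)) :
    press γ UL + UL.1 * (vel UL - sL) * (vel UL - Sst)
      = press γ UR + UR.1 * (vel UR - sR) * (vel UR - Sst) := by
  linear_combination hdef

/-- Cross identity: `F_{*L} + S_*(U_{*R} − U_{*L}) = F_{*R}`. -/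
lemma cross {UL UR : St} (hρL : UL.1 ≠ 0) (hρR : UR.1 ≠ 0) {sL sR Sst : ℝ}
    (hdL : sL - Sst ≠ 0) (hdR : sR - Sst ≠ 0)
    (hwL : sL - vel UL ≠ 0) (hwR : sR - vel UR ≠ 0)
    (hdef : (UL.1 * (sL - vel UL) - UR.1 * (sR - vel UR)) * Sst =
      press γ UR - press γ UL + UL.1 * vel UL * (sL - vel UL)
        - UR.1 * vel UR * (sR - vel UR)) :
    Fstar γ sL Sst UL + Sst • (Ustar γ sR Sst UR - Ustar γ sL Sst UL)
      = Fstar γ sR Sst UR := by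
  rw [fstar_eq hρL hdL hwL, fstar_eq hρR hdR hwR, pstar_eq hdef]
  module

end helpers4
section helpers5

lemma sstar_aux {γ ρL ρR pL pR cL cR uL uR sL sR : ℝ} (hγ : 1 < γ)
    (h1L : 0 < ρL) (h1R : 0 < ρR) (hpL : 0 < pL) (hpR : 0 < pR)
    (hcL : 0 < cL) (hcR : 0 < cR)
    (hkL : ρL * cL ^ 2 = γ * pL) (hkR : ρR * cR ^ 2 = γ * pR)
    (e1 : sL ≤ uL - cL) (e2 : sL ≤ uR - cR) (e3 : uL + cL ≤ sR) (e4 : uR + cR ≤ sR) :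
    ρL * (sL - uL) - ρR * (sR - uR) < 0 ∧
    pR - pL + ρL * uL * (sL - uL) - ρR * uR * (sR - uR)
      < sL * (ρL * (sL - uL) - ρR * (sR - uR)) ∧
    sR * (ρL * (sL - uL) - ρR * (sR - uR))
      < pR - pL + ρL * uL * (sL - uL) - ρR * uR * (sR - uR) := by
  have a1 : 0 ≤ uL - cL - sL := by linarith
  have a2 : 0 ≤ uR - cR - sL := by linarith
  have a3 : 0 ≤ sR - uL - cL := by linarith
  have a4 : 0 ≤ sR - uR - cR := by linarith
  refine ⟨?_, ?_, ?_⟩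
  · nlinarith [mul_pos h1L hcL, mul_pos h1R hcR,
      mul_le_mul_of_nonneg_left (show sL - uL ≤ -cL by linarith) h1L.le,
      mul_le_mul_of_nonneg_left (show cR ≤ sR - uR by linarith) h1R.le]
  · nlinarith [mul_nonneg (mul_nonneg h1L.le a1) (show (0:ℝ) ≤ uL - sL + cL by linarith),
      mul_nonneg (mul_nonneg h1R.le a2) (show (0:ℝ) ≤ sR - uR by linarith),
      mul_nonneg (mul_nonneg h1R.le hcR.le) a4,
      hkL, hkR, mul_pos h1L hpL, mul_pos h1R hpR]
  · nlinarith [mul_nonneg (mul_nonneg h1L.le a1) (show (0:ℝ) ≤ sR - uL by linarith),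
      mul_nonneg (mul_nonneg h1L.le hcL.le) a3,
      mul_nonneg (mul_nonneg h1R.le a4) (show (0:ℝ) ≤ sR - uR + cR by linarith),
      hkL, hkR, mul_pos h1L hpL, mul_pos h1R hpR]

variable {γ : ℝ}

lemma sstar_facts (hγ : 1 < γ) {UL UR : St} (hUL : UL ∈ admG) (hUR : UR ∈ admG) :
    SL γ UL UR < Sstar γ UL UR ∧ Sstar γ UL UR < SR γ UL UR ∧
    (UL.1 * (SL γ UL UR - vel UL) - UR.1 * (SR γ UL UR - vel UR)) * Sstar γ UL UR =
      press γ UR - press γ UL + UL.1 * vel UL * (SL γ UL UR - vel UL)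
        - UR.1 * vel UR * (SR γ UL UR - vel UR) := by
  have h1L := hUL.1; have h1R := hUR.1
  have hpL := press_pos hγ hUL; have hpR := press_pos hγ hUR
  have hcL := sound_pos hγ hUL; have hcR := sound_pos hγ hUR
  have hkL := sound_key hγ hUL; have hkR := sound_key hγ hUR
  have e1 : SL γ UL UR ≤ vel UL - sound γ UL := min_le_left _ _
  have e2 : SL γ UL UR ≤ vel UR - sound γ UR := min_le_right _ _
  have e3 : vel UL + sound γ UL ≤ SR γ UL UR := le_max_left _ _
  have e4 : vel UR + sound γ UR ≤ SR γ UL UR := le_max_right _ _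
  obtain ⟨hD, hg1, hg2⟩ := sstar_aux hγ h1L h1R hpL hpR hcL hcR hkL hkR e1 e2 e3 e4
  have hSst : Sstar γ UL UR =
      (press γ UR - press γ UL + UL.1 * vel UL * (SL γ UL UR - vel UL)
        - UR.1 * vel UR * (SR γ UL UR - vel UR)) /
      (UL.1 * (SL γ UL UR - vel UL) - UR.1 * (SR γ UL UR - vel UR)) := rfl
  refine ⟨?_, ?_, ?_⟩
  · rw [hSst, lt_div_iff_of_neg hD]; exact hg1
  · rw [hSst, div_lt_iff_of_neg hD]; exact hg2
  · rw [hSst, mul_comm]; exact div_mul_cancel₀ _ (ne_of_lt hD)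

end helpers5
section helpers6
variable {γ : ℝ}

lemma shift_cond (hγ : 1 < γ) {U : St} (hU : U ∈ admG) {lam a : ℝ} (hlam : 0 < lam)
    (ha : lam * sound γ U ≤ a) :
    (lam * press γ U) ^ 2 < a ^ 2 * (2 * U.1 * U.2.2 - U.2.1 ^ 2) := by
  have h1 := hU.1
  have hp := press_pos hγ hU
  have hc := sound_pos hγ hU
  have hk := sound_key hγ hU
  have hT := press_key hγ hU
  have hTpos : 0 < 2 * U.1 * U.2.2 - U.2.1 ^ 2 := by nlinarith
  have hlc : 0 < lam * sound γ U := mul_pos hlam hc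
  have ha2 : (lam * sound γ U) ^ 2 ≤ a ^ 2 := by nlinarith
  have key : (lam * sound γ U) ^ 2 * (2 * U.1 * U.2.2 - U.2.1 ^ 2) ≤
      a ^ 2 * (2 * U.1 * U.2.2 - U.2.1 ^ 2) :=
    mul_le_mul_of_nonneg_right ha2 hTpos.le
  have hfin : (lam * press γ U) ^ 2 * (U.1 * (γ - 1)) <
      (lam * sound γ U) ^ 2 * (2 * U.1 * U.2.2 - U.2.1 ^ 2) * (U.1 * (γ - 1)) := by
    have hrw : (lam * sound γ U) ^ 2 * (2 * U.1 * U.2.2 - U.2.1 ^ 2) * (U.1 * (γ - 1))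
        = lam ^ 2 * (U.1 * sound γ U ^ 2) * ((γ - 1) * (2 * U.1 * U.2.2 - U.2.1 ^ 2)) := by
      ring
    rw [hrw, hk, ← hT]
    nlinarith [mul_pos (mul_pos hlam hlam) (mul_pos hp hp), mul_pos h1 hp,
      mul_pos (mul_pos (mul_pos hlam hlam) (mul_pos hp hp)) h1]
  have hpos : 0 < U.1 * (γ - 1) := by nlinarith
  nlinarith [key, hfin, hpos]

lemma convex_mem {U V : St} (hU : U ∈ admG) (hV : V ∈ admG) {t : ℝ}
    (h0 : 0 ≤ t) (h1 : t ≤ 1) : (1 - t) • U + t • V ∈ admG := by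
  rcases eq_or_lt_of_le h0 with h | h
  · rw [← h]; simpa using hU
  · rcases eq_or_lt_of_le h1 with h' | h'
    · rw [h']; simpa using hV
    · exact admG_add (smul_mem (by linarith) hU) (smul_mem h hV)

set_option maxHeartbeats 2000000 in
lemma one_sided (hγ : 1 < γ) {UL UR : St} (hUL : UL ∈ admG) (hUR : UR ∈ admG)
    {lam : ℝ} (hlam : 0 < lam)
    (hL : lam * alphaMax γ UL ≤ 1) (hR : lam * alphaMax γ UR ≤ 1) :
    UR - lam • (eulerF γ UR - Fhllc γ UL UR) ∈ admG ∧
      UL - lam • (Fhllc γ UL UR - eulerF γ UL) ∈ admG := by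
  have h1L := hUL.1; have h1R := hUR.1
  have hρL : UL.1 ≠ 0 := ne_of_gt h1L
  have hρR : UR.1 ≠ 0 := ne_of_gt h1R
  have hpL := press_pos hγ hUL; have hpR := press_pos hγ hUR
  have hcL := sound_pos hγ hUL; have hcR := sound_pos hγ hUR
  have hkL := sound_key hγ hUL; have hkR := sound_key hγ hUR
  obtain ⟨hb1, hb2, hdef⟩ := sstar_facts hγ hUL hUR
  have e1 : SL γ UL UR ≤ vel UL - sound γ UL := min_le_left _ _
  have e2 : SL γ UL UR ≤ vel UR - sound γ UR := min_le_right _ _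
  have e3 : vel UL + sound γ UL ≤ SR γ UL UR := le_max_left _ _
  have e4 : vel UR + sound γ UR ≤ SR γ UL UR := le_max_right _ _
  have hAL : lam * (|vel UL| + sound γ UL) ≤ 1 := hL
  have hAR : lam * (|vel UR| + sound γ UR) ≤ 1 := hR
  have habsL1 : lam * vel UL ≤ lam * |vel UL| :=
    mul_le_mul_of_nonneg_left (le_abs_self _) hlam.le
  have habsL2 : lam * (-vel UL) ≤ lam * |vel UL| :=
    mul_le_mul_of_nonneg_left (neg_le_abs _) hlam.le
  have habsR1 : lam * vel UR ≤ lam * |vel UR| :=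
    mul_le_mul_of_nonneg_left (le_abs_self _) hlam.le
  have habsR2 : lam * (-vel UR) ≤ lam * |vel UR| :=
    mul_le_mul_of_nonneg_left (neg_le_abs _) hlam.le
  have hvL1 : lam * vel UL ≤ 1 - lam * sound γ UL := by nlinarith
  have hvL2 : -(1 - lam * sound γ UL) ≤ lam * vel UL := by nlinarith
  have hvR1 : lam * vel UR ≤ 1 - lam * sound γ UR := by nlinarith
  have hvR2 : -(1 - lam * sound γ UR) ≤ lam * vel UR := by nlinarith
  have hsRle : lam * SR γ UL UR ≤ 1 := by
    have hx1 : lam * (vel UL + sound γ UL) ≤ 1 := by nlinarith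
    have hx2 : lam * (vel UR + sound γ UR) ≤ 1 := by nlinarith
    have hrw : SR γ UL UR = max (alphaPlus γ UL) (alphaPlus γ UR) := rfl
    rcases max_cases (alphaPlus γ UL) (alphaPlus γ UR) with ⟨hm, _⟩ | ⟨hm, _⟩ <;>
      rw [hrw, hm] <;> [exact hx1; exact hx2]
  have hsLge : -1 ≤ lam * SL γ UL UR := by
    have hx1 : -1 ≤ lam * (vel UL - sound γ UL) := by nlinarith
    have hx2 : -1 ≤ lam * (vel UR - sound γ UR) := by nlinarith
    have hrw : SL γ UL UR = min (alphaMinus γ UL) (alphaMinus γ UR) := rfl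
    rcases min_cases (alphaMinus γ UL) (alphaMinus γ UR) with ⟨hm, _⟩ | ⟨hm, _⟩ <;>
      rw [hrw, hm] <;> [exact hx1; exact hx2]
  -- star state memberships (usable whenever the relevant sign conditions hold)
  have hwLneg : SL γ UL UR - vel UL < 0 := by linarith
  have hwRpos : 0 < SR γ UL UR - vel UR := by linarith
  have hypL : γ * press γ UL ≤ UL.1 * (SL γ UL UR - vel UL) ^ 2 := by
    nlinarith [mul_nonneg (show (0:ℝ) ≤ vel UL - SL γ UL UR - sound γ UL by linarith)
      (show (0:ℝ) ≤ vel UL - SL γ UL UR + sound γ UL by linarith), h1L]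
  have hypR : γ * press γ UR ≤ UR.1 * (SR γ UL UR - vel UR) ^ 2 := by
    nlinarith [mul_nonneg (show (0:ℝ) ≤ SR γ UL UR - vel UR - sound γ UR by linarith)
      (show (0:ℝ) ≤ SR γ UL UR - vel UR + sound γ UR by linarith), h1R]
  have huLstar : Ustar γ (SL γ UL UR) (Sstar γ UL UR) UL ∈ admG :=
    ustar_mem hγ hUL (mul_pos_of_neg_of_neg hwLneg (by linarith)) hypL
  have huRstar : Ustar γ (SR γ UL UR) (Sstar γ UL UR) UR ∈ admG :=
    ustar_mem hγ hUR (mul_pos hwRpos (by linarith)) hypR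
  have hne1 : SL γ UL UR - Sstar γ UL UR ≠ 0 := ne_of_lt (by linarith)
  have hne2 : SR γ UL UR - Sstar γ UL UR ≠ 0 := ne_of_gt (by linarith)
  have hwL' : SL γ UL UR - vel UL ≠ 0 := ne_of_lt hwLneg
  have hwR' : SR γ UL UR - vel UR ≠ 0 := ne_of_gt hwRpos
  have hcross := cross hρL hρR hne1 hne2 hwL' hwR' hdef
  rcases le_or_gt 0 (SL γ UL UR) with hc1 | hc1
  · -- case 1 : 0 ≤ S_L
    have hFh : Fhllc γ UL UR = eulerF γ UL := by unfold Fhllc; rw [if_pos hc1]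
    have huLc : sound γ UL ≤ vel UL := by linarith
    constructor
    · rw [hFh]
      have hW : UR - lam • (eulerF γ UR - eulerF γ UL)
          = ((1 - lam * vel UR) • UR
              + (-(lam * press γ UR)) • (((0:ℝ), (1:ℝ), vel UR) : St))
            + ((lam * vel UL) • UL
              + (lam * press γ UL) • (((0:ℝ), (1:ℝ), vel UL) : St)) := by
        rw [eulerF_decomp hγ hUR, eulerF_decomp hγ hUL]; module
      rw [hW]
      apply admG_add
      · exact shift_mem hUR (by nlinarith) (by rw [neg_sq]; exact shift_cond hγ hUR hlam (by linarith))
      · refine shift_mem hUL (lt_of_lt_of_le (mul_pos hlam hcL) ?_) (shift_cond hγ hUL hlam ?_)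
        · exact mul_le_mul_of_nonneg_left huLc hlam.le
        · exact mul_le_mul_of_nonneg_left huLc hlam.le
    · rw [hFh, sub_self, smul_zero, sub_zero]; exact hUL
  · rcases le_or_gt 0 (Sstar γ UL UR) with hc2 | hc2
    · -- case 2 : S_L < 0 ≤ S_*
      have hFh : Fhllc γ UL UR = Fstar γ (SL γ UL UR) (Sstar γ UL UR) UL := by
        unfold Fhllc; rw [if_neg (not_le.mpr hc1), if_pos hc2]
      have hFL : Fstar γ (SL γ UL UR) (Sstar γ UL UR) UL
          = Fstar γ (SR γ UL UR) (Sstar γ UL UR) UR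
            - Sstar γ UL UR • (Ustar γ (SR γ UL UR) (Sstar γ UL UR) UR
              - Ustar γ (SL γ UL UR) (Sstar γ UL UR) UL) := eq_sub_of_add_eq hcross
      constructor
      · rw [hFh]
        have hW : UR - lam • (eulerF γ UR - Fstar γ (SL γ UL UR) (Sstar γ UL UR) UL)
            = ((lam * (SR γ UL UR - Sstar γ UL UR))
                  • Ustar γ (SR γ UL UR) (Sstar γ UL UR) UR
                + (1 - lam * SR γ UL UR) • UR)
              + (lam * Sstar γ UL UR) • Ustar γ (SL γ UL UR) (Sstar γ UL UR) UL := by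
          rw [hFL]; unfold Fstar; module
        rw [hW]
        exact add_smul_mem
          (add_smul_mem (smul_mem (mul_pos hlam (by linarith)) huRstar)
            (by linarith) hUR)
          (mul_nonneg hlam.le hc2) huLstar
      · rw [hFh]
        have hW : UL - lam • (Fstar γ (SL γ UL UR) (Sstar γ UL UR) UL - eulerF γ UL)
            = (-(lam * SL γ UL UR)) • Ustar γ (SL γ UL UR) (Sstar γ UL UR) UL
              + (1 + lam * SL γ UL UR) • UL := by
          unfold Fstar; module
        rw [hW]
        exact add_smul_mem (smul_mem (by nlinarith) huLstar) (by linarith) hUL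
    · rcases le_or_gt 0 (SR γ UL UR) with hc3 | hc3
      · -- case 3 : S_* < 0 ≤ S_R
        have hFh : Fhllc γ UL UR = Fstar γ (SR γ UL UR) (Sstar γ UL UR) UR := by
          unfold Fhllc; rw [if_neg (not_le.mpr hc1), if_neg (not_le.mpr hc2), if_pos hc3]
        constructor
        · rw [hFh]
          have hW : UR - lam • (eulerF γ UR - Fstar γ (SR γ UL UR) (Sstar γ UL UR) UR)
              = (1 - lam * SR γ UL UR) • UR
                + (lam * SR γ UL UR) • Ustar γ (SR γ UL UR) (Sstar γ UL UR) UR := by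
            unfold Fstar; module
          rw [hW]
          exact convex_mem hUR huRstar (mul_nonneg hlam.le hc3) hsRle
        · rw [hFh]
          have hW : UL - lam • (Fstar γ (SR γ UL UR) (Sstar γ UL UR) UR - eulerF γ UL)
              = ((lam * (Sstar γ UL UR - SL γ UL UR))
                    • Ustar γ (SL γ UL UR) (Sstar γ UL UR) UL
                  + (1 + lam * SL γ UL UR) • UL)
                + (-(lam * Sstar γ UL UR)) • Ustar γ (SR γ UL UR) (Sstar γ UL UR) UR := by
            rw [← hcross]; unfold Fstar; module
          rw [hW]
          exact add_smul_mem
            (add_smul_mem (smul_mem (mul_pos hlam (by linarith)) huLstar)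
              (by linarith) hUL)
            (by nlinarith) huRstar
      · -- case 4 : S_R < 0
        have hFh : Fhllc γ UL UR = eulerF γ UR := by
          unfold Fhllc
          rw [if_neg (not_le.mpr hc1), if_neg (not_le.mpr hc2), if_neg (not_le.mpr hc3)]
        have huRc : vel UR ≤ -sound γ UR := by linarith
        have huLc : vel UL ≤ -sound γ UL := by linarith
        constructor
        · rw [hFh, sub_self, smul_zero, sub_zero]; exact hUR
        · rw [hFh]
          have hW : UL - lam • (eulerF γ UR - eulerF γ UL)
              = ((1 + lam * vel UL) • UL
                  + (lam * press γ UL) • (((0:ℝ), (1:ℝ), vel UL) : St))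
                + ((-(lam * vel UR)) • UR
                  + (-(lam * press γ UR)) • (((0:ℝ), (1:ℝ), vel UR) : St)) := by
            rw [eulerF_decomp hγ hUR, eulerF_decomp hγ hUL]; module
          rw [hW]
          apply admG_add
          · exact shift_mem hUL (by nlinarith) (shift_cond hγ hUL hlam (by nlinarith))
          · refine shift_mem hUR ?_ ?_
            · have := mul_le_mul_of_nonneg_left huRc hlam.le
              nlinarith [mul_pos hlam hcR]
            · rw [neg_sq]
              refine shift_cond hγ hUR hlam ?_
              have := mul_le_mul_of_nonneg_left huRc hlam.le
              linarith

end helpers6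
section helpers7
variable {γ : ℝ}

lemma vel_smul {a : ℝ} (ha : a ≠ 0) (U : St) : vel (a • U) = vel U := by
  unfold vel
  simp only [Prod.smul_fst, Prod.smul_snd, smul_eq_mul]
  rw [mul_div_mul_left _ _ ha]

lemma press_smul {a : ℝ} (ha : a ≠ 0) {U : St} (hU : 0 < U.1) (Ug : (0:ℝ) < 1) :
    press γ (a • U) = a * press γ U := by
  have : U.1 ≠ 0 := ne_of_gt hU
  unfold press
  simp only [Prod.smul_fst, Prod.smul_snd, smul_eq_mul]
  field_simp

lemma sound_smul {a : ℝ} (ha : 0 < a) {U : St} (hU : 0 < U.1) :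
    sound γ (a • U) = sound γ U := by
  unfold sound
  rw [press_smul (ne_of_gt ha) hU one_pos]
  congr 1
  simp only [Prod.smul_fst, smul_eq_mul]
  have h1 : U.1 ≠ 0 := ne_of_gt hU
  have h2 : a ≠ 0 := ne_of_gt ha
  field_simp

lemma alphaMax_smul {a : ℝ} (ha : 0 < a) {U : St} (hU : 0 < U.1) :
    alphaMax γ (a • U) = alphaMax γ U := by
  unfold alphaMax
  rw [vel_smul (ne_of_gt ha), sound_smul ha hU]

end helpers7

/-- Lemma 2.10: scaled one-sided HLLC positivity. -/
theorem hllc_scaled_one_sided_positivity (γ : ℝ) (hγ : 1 < γ)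
    (ζ₁ ζ₂ ζ₃ ζ₄ : ℝ) (hζ₁ : 0 < ζ₁) (hζ₂ : 0 < ζ₂) (hζ₃ : 0 < ζ₃) (hζ₄ : 0 < ζ₄)
    (U₀ U₁ : St) (hU₀ : U₀ ∈ admG) (hU₁ : U₁ ∈ admG)
    (lam : ℝ) (hlam : 0 < lam)
    (hcfl : lam * max (alphaMax γ U₀) (alphaMax γ U₁) ≤ 1) :
    ζ₂ • U₁ - lam • (eulerF γ (ζ₂ • U₁) - Fhllc γ (ζ₁ • U₀) (ζ₂ • U₁)) ∈ admG ∧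
      ζ₃ • U₀ - lam • (Fhllc γ (ζ₃ • U₀) (ζ₄ • U₁) - eulerF γ (ζ₃ • U₀)) ∈ admG := by
  have hm0 : lam * alphaMax γ U₀ ≤ 1 :=
    le_trans (mul_le_mul_of_nonneg_left (le_max_left _ _) hlam.le) hcfl
  have hm1 : lam * alphaMax γ U₁ ≤ 1 :=
    le_trans (mul_le_mul_of_nonneg_left (le_max_right _ _) hlam.le) hcfl
  constructor
  · refine (one_sided hγ (smul_mem hζ₁ hU₀) (smul_mem hζ₂ hU₁) hlam ?_ ?_).1
    · rw [alphaMax_smul hζ₁ hU₀.1]; exact hm0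
    · rw [alphaMax_smul hζ₂ hU₁.1]; exact hm1
  · refine (one_sided hγ (smul_mem hζ₃ hU₀) (smul_mem hζ₄ hU₁) hlam ?_ ?_).2
    · rw [alphaMax_smul hζ₃ hU₀.1]; exact hm0
    · rw [alphaMax_smul hζ₄ hU₁.1]; exact hm1
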